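/- Let w be a Lyndon word with standard factorization w = u·v (v the longest proper Lyndon suffix). Then v is also the minimal Lyndon word, in lexicographic order, among all proper Lyndon suffixes of w. -/

import Mathlib

/-- A nonempty word over a totally ordered alphabet is a *Lyndon word* if it is strictly
smaller, in the lexicographic order, than every proper cyclic rotation of itself. -/
def IsLyndon {α : Type*} [LinearOrder α] (w : List α) : Prop :=
  w ≠ [] ∧ ∀ u v : List α, u ≠ [] → v ≠ [] → w = u ++ v → w < v ++ u

section aux

variable {α : Type*} [LinearOrder α]

lemma lex_of_lt {l₁ l₂ : List α} (h : l₁ < l₂) : List.Lex (· < ·) l₁ l₂ := h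

lemma lt_of_lex {l₁ l₂ : List α} (h : List.Lex (· < ·) l₁ l₂) : l₁ < l₂ := h

lemma append_lt_append_left_iff (s : List α) {t₁ t₂ : List α} :
    s ++ t₁ < s ++ t₂ ↔ t₁ < t₂ := by
  induction s with
  | nil => rfl
  | cons a s ih =>
    show List.Lex _ (a :: (s ++ t₁)) (a :: (s ++ t₂)) ↔ _
    rw [List.lex_cons_iff]; exact ih

lemma lt_or_prefix_of_lt_append {a b c : List α} (h : a < b ++ c) :
    a < b ∨ b <+: a := by
  induction b generalizing a with
  | nil => exact Or.inr (List.nil_prefix)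
  | cons x b ih =>
    cases a with
    | nil => exact Or.inl List.Lex.nil
    | cons y a =>
      cases (h : List.Lex (· < ·) (y :: a) (x :: (b ++ c))) with
      | rel h' => exact Or.inl (List.Lex.rel h')
      | cons h' =>
        rcases ih h' with h'' | h''
        · exact Or.inl (List.Lex.cons h'')
        · exact Or.inr ((List.cons_prefix_cons).2 ⟨rfl, h''⟩)

lemma append_lt_append_of_lt {a b : List α} (s : List α) (h : a < b) (hnp : ¬ a <+: b) :
    a ++ s < b ++ s := by
  induction h with
  | nil => exact absurd List.nil_prefix hnp
  | @cons x l₁ l₂ h' ih =>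
    exact List.Lex.cons (ih (fun hp => hnp ((List.cons_prefix_cons).2 ⟨rfl, hp⟩)))
  | rel h' => exact List.Lex.rel h'

/-- A Lyndon word is smaller than each of its proper nonempty suffixes. -/
lemma IsLyndon.lt_suffix {w p s : List α} (hw : IsLyndon w) (hp : p ≠ []) (hs : s ≠ [])
    (h : w = p ++ s) : w < s := by
  have hrot := hw.2 p s hp hs h
  rcases lt_or_prefix_of_lt_append hrot with h1 | h1
  · exact h1
  · -- s is a prefix of w : w = s ++ t
    obtain ⟨t, ht⟩ := h1
    have hlen : t.length = p.length := by
      have := congrArg List.length (ht.trans h)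
      simp at this; omega
    have hts : t ≠ [] := by
      intro h0
      apply hp
      have : p.length = 0 := by rw [← hlen, h0]; rfl
      exact List.length_eq_zero_iff.mp this
    -- rotation with (s, t) :  w < t ++ s
    have hrot2 := hw.2 s t hs hts ht.symm
    -- from hrot and ht : s ++ t < s ++ p, so t < p
    have htp : t < p := by
      have : s ++ t < s ++ p := ht ▸ hrot
      exact (append_lt_append_left_iff s).1 this
    have hnp : ¬ t <+: p := by
      intro hpre
      exact absurd (List.IsPrefix.eq_of_length hpre hlen) (ne_of_lt htp)
    have : t ++ s < p ++ s := append_lt_append_of_lt s htp hnp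
    rw [← h] at this
    exact absurd (lt_trans hrot2 this) (lt_irrefl w)

end aux

/-- Let `w = u ++ v` be the standard factorization of a Lyndon word `w` (so `v` is the
longest proper Lyndon suffix of `w`).  Then `v` is also the minimal Lyndon word, in the
lexicographic order, among all proper Lyndon suffixes of `w`. -/
theorem stdFactorization_right_factor_minimal {α : Type*} [LinearOrder α] (u v : List α)
    (hw : IsLyndon (u ++ v)) (hu : u ≠ []) (hv : IsLyndon v)
    (hmax : ∀ u' v' : List α, u' ≠ [] → u' ++ v' = u ++ v → IsLyndon v' →
      v'.length ≤ v.length) :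
    ∀ u' v' : List α, u' ≠ [] → u' ++ v' = u ++ v → IsLyndon v' → v ≤ v' := by
  intro u' v' hu' heq hv'
  have hlen : v'.length ≤ v.length := hmax u' v' hu' heq hv'
  have hsuf' : v' <:+ u ++ v := ⟨u', heq⟩
  have hsuf : v <:+ u ++ v := ⟨u, rfl⟩
  have hvv : v' <:+ v := List.suffix_of_suffix_length_le hsuf' hsuf hlen
  obtain ⟨p, hp⟩ := hvv
  rcases eq_or_ne p [] with rfl | hpne
  · simp at hp; exact le_of_eq hp.symm
  · exact le_of_lt (hv.lt_suffix hpne hv'.1 hp.symm)
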